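/- arXiv:2603.00677 — 3 statements merged into one kernel-verified Lean document; each statement's English description precedes it below -/
import Mathlib

section
/- Let V be a finite vertex set, G the complete simple graph on V with face poset X_G = V ⊕ E, and let W, W' : V → V → ℝ satisfy ‖W − W'‖_∞ ≤ ε for some ε ≥ 0. Then for every λ ∈ ℝ: every equivalence class of the equivalence relation generated by A_{λ+ε}(W) is contained in some equivalence class of the equivalence relation generated by A_λ(W'), and every equivalence class of the equivalence relation generated by A_λ(W') is contained in some equivalence class of the equivalence relation generated by A_{λ−ε}(W). -/
/-- The active merge relation at threshold `lam` on the face poset of the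
complete graph on `V`: a vertex `i` is related to the edge `s(i,j)` whenever
`W i j > lam` (taking both orientations into account via the symmetry of
`s(i,j)`). -/
def mergeRel {V : Type*} (W : V → V → ℝ) (lam : ℝ)
    (x y : V ⊕ ((⊤ : SimpleGraph V).edgeSet)) : Prop :=
  ∃ (i j : V) (h : s(i, j) ∈ (⊤ : SimpleGraph V).edgeSet),
    W i j > lam ∧ x = Sum.inl i ∧ y = Sum.inr ⟨s(i, j), h⟩

lemma mergeRel_mono {V : Type*} {W W' : V → V → ℝ} {l l' : ℝ}
    (hW : ∀ i j, W i j > l → W' i j > l') :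
    ∀ x y, mergeRel W l x y → mergeRel W' l' x y := by
  rintro x y ⟨i, j, hij, hgt, rfl, rfl⟩
  exact ⟨i, j, hij, hW i j hgt, rfl, rfl⟩

/-- Filtration stability: if `‖W − W'‖_∞ ≤ ε`, then for every threshold `lam`
every equivalence class of the equivalence relation generated by the active
merge relation for `W` at `lam + ε` is contained in some equivalence class of
the one for `W'` at `lam`, and every equivalence class for `W'` at `lam` is
contained in some equivalence class for `W` at `lam − ε`. -/
theorem multivector_field_sandwich {V : Type*} [Fintype V] [DecidableEq V]
    (W W' : V → V → ℝ) (ε : ℝ) (hε : 0 ≤ ε)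
    (h : ∀ i j : V, |W i j - W' i j| ≤ ε) (lam : ℝ) :
    (∀ x : V ⊕ ((⊤ : SimpleGraph V).edgeSet),
      ∃ z, {y | Relation.EqvGen (mergeRel W (lam + ε)) x y} ⊆
        {y | Relation.EqvGen (mergeRel W' lam) z y}) ∧
    (∀ x : V ⊕ ((⊤ : SimpleGraph V).edgeSet),
      ∃ z, {y | Relation.EqvGen (mergeRel W' lam) x y} ⊆
        {y | Relation.EqvGen (mergeRel W (lam - ε)) z y}) := by
  constructor
  · intro x
    refine ⟨x, fun y hy => ?_⟩
    refine Relation.EqvGen.mono (mergeRel_mono fun i j hgt => ?_) _ _ hy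
    have := abs_le.mp (h i j)
    linarith [this.1]
  · intro x
    refine ⟨x, fun y hy => ?_⟩
    refine Relation.EqvGen.mono (mergeRel_mono fun i j hgt => ?_) _ _ hy
    have := abs_le.mp (h i j)
    linarith [this.2]
end

section
/- Let V be a finite vertex set, G the complete simple graph on V with face poset X_G = V ⊕ E equipped with its Alexandroff topology, and let W, W' : V → V → ℝ satisfy ‖W − W'‖_∞ ≤ ε for some ε ≥ 0. Then for every λ ∈ ℝ: every strongly connected component of the induced dynamic relation Π of the multivector field 𝒱_{λ+ε}(W) is contained in some strongly connected component of Π of 𝒱_λ(W'), and every strongly connected component of Π of 𝒱_λ(W') is contained in some strongly connected component of Π of 𝒱_{λ−ε}(W). -/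
/-- The face order on `V ⊕ E` of a simple graph: a vertex is below each edge
it is an endpoint of, together with reflexivity. -/
def faceLe {V : Type*} (G : SimpleGraph V) :
    (V ⊕ G.edgeSet) → (V ⊕ G.edgeSet) → Prop
  | Sum.inl v, Sum.inl w => v = w
  | Sum.inl v, Sum.inr e => v ∈ (e : Sym2 V)
  | Sum.inr _, Sum.inl _ => False
  | Sum.inr e, Sum.inr f => e = f

/-- The Alexandroff topology associated with a relation `le` on `X`:
the open sets are exactly the upper sets with respect to `le`. -/
def alexTop (X : Type*) (le : X → X → Prop) : TopologicalSpace X where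
  IsOpen s := ∀ ⦃a b : X⦄, le a b → a ∈ s → b ∈ s
  isOpen_univ := fun _ _ _ _ => trivial
  isOpen_inter := fun _ _ hs ht _ _ hab hmem => ⟨hs hab hmem.1, ht hab hmem.2⟩
  isOpen_sUnion := fun S hS a b hab hmem => by
    obtain ⟨u, huS, hau⟩ := hmem
    exact ⟨u, huS, hS u huS hab hau⟩

/-- The induced dynamic relation of a partition (given as an equivalence
relation) on a space with topology `t`: `x` is related to `y` iff `y` belongs
to the block of `x` or to its closure. -/
def dynRel {X : Type*} (t : TopologicalSpace X) (P : Setoid X) (x y : X) : Prop :=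
  y ∈ {z | P x z} ∪ @closure X t {z | P x z}

/-- The strongly connected component of `x` for a relation `r`: the set of
points `y` mutually reachable from `x` via the reflexive-transitive closure. -/
def scc {X : Type*} (r : X → X → Prop) (x : X) : Set X :=
  {y | Relation.ReflTransGen r x y ∧ Relation.ReflTransGen r y x}

/-- The graph multivector field at threshold `lam`, as the equivalence relation
generated by the active merge relation. -/
def mvf {V : Type*} (W : V → V → ℝ) (lam : ℝ) :
    Setoid (V ⊕ ((⊤ : SimpleGraph V).edgeSet)) :=
  Relation.EqvGen.setoid (mergeRel W lam)

lemma scc_mono {X : Type*} {r r' : X → X → Prop} (hrr : ∀ a b, r a b → r' a b)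
    (x : X) : scc r x ⊆ scc r' x := fun y hy =>
  ⟨Relation.ReflTransGen.mono hrr _ _ hy.1, Relation.ReflTransGen.mono hrr _ _ hy.2⟩

lemma dynRel_mono {X : Type*} (t : TopologicalSpace X) {P Q : Setoid X}
    (hPQ : ∀ a b, P a b → Q a b) :
    ∀ a b, dynRel t P a b → dynRel t Q a b := by
  intro a b hab
  rcases hab with hb | hb
  · exact Or.inl (hPQ _ _ hb)
  · exact Or.inr (closure_mono (fun z hz => hPQ _ _ hz) hb)

lemma mvf_mono {V : Type*} {W W' : V → V → ℝ} {lam lam' : ℝ}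
    (hm : ∀ i j, W i j > lam → W' i j > lam') :
    ∀ a b, (mvf W lam) a b → (mvf W' lam') a b := by
  intro a b hab
  refine Relation.EqvGen.mono ?_ _ _ hab
  rintro x y ⟨i, j, he, hgt, rfl, rfl⟩
  exact ⟨i, j, he, hm i j hgt, rfl, rfl⟩

/-- Stability of Morse decompositions: if `‖W − W'‖_∞ ≤ ε`, then for every
threshold `lam`, every strongly connected component of the induced dynamic
relation of the multivector field of `W` at `lam + ε` is contained in some
strongly connected component of the one of `W'` at `lam`, and every strongly
connected component for `W'` at `lam` is contained in some strongly connected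
component for `W` at `lam − ε`. -/
theorem morse_sets_sandwich {V : Type*} [Fintype V] [DecidableEq V]
    (W W' : V → V → ℝ) (ε : ℝ) (hε : 0 ≤ ε)
    (h : ∀ i j : V, |W i j - W' i j| ≤ ε) (lam : ℝ) :
    (∀ x : V ⊕ ((⊤ : SimpleGraph V).edgeSet),
      ∃ z, scc (dynRel (alexTop _ (faceLe (⊤ : SimpleGraph V))) (mvf W (lam + ε))) x ⊆
        scc (dynRel (alexTop _ (faceLe (⊤ : SimpleGraph V))) (mvf W' lam)) z) ∧
    (∀ x : V ⊕ ((⊤ : SimpleGraph V).edgeSet),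
      ∃ z, scc (dynRel (alexTop _ (faceLe (⊤ : SimpleGraph V))) (mvf W' lam)) x ⊆
        scc (dynRel (alexTop _ (faceLe (⊤ : SimpleGraph V))) (mvf W (lam - ε))) z) := by
  constructor
  · intro x
    refine ⟨x, scc_mono (dynRel_mono _ (mvf_mono fun i j hgt => ?_)) x⟩
    have := h i j
    rw [abs_le] at this
    linarith
  · intro x
    refine ⟨x, scc_mono (dynRel_mono _ (mvf_mono fun i j hgt => ?_)) x⟩
    have := h i j
    rw [abs_le] at this
    linarith
end

section
/- Let V be a finite vertex set, G the complete simple graph on V with face poset X_G = V ⊕ E equipped with its Alexandroff topology, W : V → V → ℝ, and λ₁ ≤ λ₂ real numbers. Then the induced dynamic relation of the multivector field at λ₂ is contained in that at λ₁ (Π_{𝒱_{λ₂}(W)} ≤ Π_{𝒱_{λ₁}(W)}); consequently every strongly connected component of Π_{𝒱_{λ₂}(W)} is contained in some strongly connected component of Π_{𝒱_{λ₁}(W)}, and the number of strongly connected components of Π_{𝒱_{λ₁}(W)} is at most the number of strongly connected components of Π_{𝒱_{λ₂}(W)}. -/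
/-- Monotonicity along the filtration: for `lam₁ ≤ lam₂`, the induced dynamic
relation of the multivector field at `lam₂` is contained in the one at `lam₁`;
consequently every strongly connected component at `lam₂` is contained in some
strongly connected component at `lam₁`, and the number of strongly connected
components at `lam₁` is at most the number at `lam₂`. -/
theorem morse_sets_monotone {V : Type*} [Fintype V] [DecidableEq V]
    (W : V → V → ℝ) (lam₁ lam₂ : ℝ) (h : lam₁ ≤ lam₂) :
    (∀ x y : V ⊕ ((⊤ : SimpleGraph V).edgeSet),
      dynRel (alexTop _ (faceLe (⊤ : SimpleGraph V))) (mvf W lam₂) x y →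
      dynRel (alexTop _ (faceLe (⊤ : SimpleGraph V))) (mvf W lam₁) x y) ∧
    (∀ x : V ⊕ ((⊤ : SimpleGraph V).edgeSet),
      ∃ z, scc (dynRel (alexTop _ (faceLe (⊤ : SimpleGraph V))) (mvf W lam₂)) x ⊆
        scc (dynRel (alexTop _ (faceLe (⊤ : SimpleGraph V))) (mvf W lam₁)) z) ∧
    {s : Set (V ⊕ ((⊤ : SimpleGraph V).edgeSet)) |
        ∃ x, s = scc (dynRel (alexTop _ (faceLe (⊤ : SimpleGraph V))) (mvf W lam₁)) x}.ncard ≤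
      {s : Set (V ⊕ ((⊤ : SimpleGraph V).edgeSet)) |
        ∃ x, s = scc (dynRel (alexTop _ (faceLe (⊤ : SimpleGraph V))) (mvf W lam₂)) x}.ncard := by
  set t := alexTop _ (faceLe (⊤ : SimpleGraph V))
  set r₁ := dynRel t (mvf W lam₁)
  set r₂ := dynRel t (mvf W lam₂)
  have hmvf : ∀ x y, (mvf W lam₂) x y → (mvf W lam₁) x y := by
    intro x y hxy
    refine Relation.EqvGen.mono ?_ _ _ hxy
    rintro a b ⟨i, j, hij, hW, rfl, rfl⟩
    exact ⟨i, j, hij, lt_of_le_of_lt h hW, rfl, rfl⟩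
  have hdyn : ∀ x y, r₂ x y → r₁ x y := by
    intro x y hxy
    have hsub : {z | (mvf W lam₂) x z} ⊆ {z | (mvf W lam₁) x z} := fun z hz => hmvf x z hz
    rcases hxy with hxy | hxy
    · exact Or.inl (hsub hxy)
    · exact Or.inr (closure_mono hsub hxy)
  have hscc : ∀ x, scc r₂ x ⊆ scc r₁ x := by
    intro x y hy
    exact ⟨Relation.ReflTransGen.mono hdyn _ _ hy.1, Relation.ReflTransGen.mono hdyn _ _ hy.2⟩
  have hscc_eq : ∀ (r : (V ⊕ ((⊤ : SimpleGraph V).edgeSet)) →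
      (V ⊕ ((⊤ : SimpleGraph V).edgeSet)) → Prop) (x y), y ∈ scc r x →
      scc r x = scc r y := by
    intro r x y ⟨hxy, hyx⟩
    ext z
    exact ⟨fun hz => ⟨hyx.trans hz.1, hz.2.trans hxy⟩,
           fun hz => ⟨hxy.trans hz.1, hz.2.trans hyx⟩⟩
  refine ⟨hdyn, fun x => ⟨x, hscc x⟩, ?_⟩
  classical
  set S₁ := {s : Set (V ⊕ ((⊤ : SimpleGraph V).edgeSet)) | ∃ x, s = scc r₁ x}
  set S₂ := {s : Set (V ⊕ ((⊤ : SimpleGraph V).edgeSet)) | ∃ x, s = scc r₂ x}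
  have hf : ∀ s ∈ S₁, ∃ x, s = scc r₁ x := fun s hs => hs
  set f : Set (V ⊕ ((⊤ : SimpleGraph V).edgeSet)) →
      Set (V ⊕ ((⊤ : SimpleGraph V).edgeSet)) :=
    fun s => if hs : ∃ x, s = scc r₁ x then scc r₂ hs.choose else ∅ with hfdef
  have key : ∀ s t', s ∈ S₁ → t' ∈ S₁ → f s = f t' → s = t' := by
    intro s t' hs ht' hft
    have hs' : ∃ x, s = scc r₁ x := hs
    have ht'' : ∃ x, t' = scc r₁ x := ht'
    rw [hfdef] at hft
    simp only at hft
    rw [dif_pos hs', dif_pos ht''] at hft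
    have h1 := hs'.choose_spec
    have h2 := ht''.choose_spec
    have hy : ht''.choose ∈ scc r₂ hs'.choose := by
      rw [hft]; exact ⟨Relation.ReflTransGen.refl, Relation.ReflTransGen.refl⟩
    have : ht''.choose ∈ scc r₁ hs'.choose := hscc _ hy
    rw [h1, h2, hscc_eq r₁ _ _ this]
  refine Set.ncard_le_ncard_of_injOn f ?_ ?_ (Set.toFinite _)
  · rintro s hs
    have hs' : ∃ x, s = scc r₁ x := hs
    rw [hfdef]
    simp only
    rw [dif_pos hs']
    exact ⟨hs'.choose, rfl⟩
  · intro s hs t' ht' hft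
    exact key s t' hs ht' hft
end
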